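/- Let (W, S) be a Coxeter system and s ∈ S. Then the centralizer C_W(s) decomposes as C_W(s) = ⟨s⟩ × H, where H is the subgroup of C_W(s) consisting of elements preserving each of the two half-spaces bounded by the reflection hyperplane of s in the standard geometric representation; equivalently, C_W(s) ≅ (Z/2) × H where ⟨s⟩ ∩ H = 1 and every element of C_W(s) is uniquely a product of an element of ⟨s⟩ and one of H. -/

import Mathlib

/-- The standard bilinear form of a Coxeter matrix on `B → ℝ`:
`⟨e_i, e_j⟩ = -cos (π / M i j)` (with `M i j = 0` standing for `∞`, and indeed
`-cos (π / 0) = -1` by the Lean convention `π / 0 = 0`). -/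
noncomputable def geomForm {B : Type*} [Fintype B] (M : CoxeterMatrix B)
    (v w : B → ℝ) : ℝ :=
  ∑ i, ∑ j, v i * w j * (-Real.cos (Real.pi / (M i j : ℝ)))

section aux
variable {B : Type*} [Fintype B] {M : CoxeterMatrix B}

lemma geomForm_smul_right (u v : B → ℝ) (c : ℝ) :
    geomForm M u (c • v) = c * geomForm M u v := by
  unfold geomForm
  rw [Finset.mul_sum]
  refine Finset.sum_congr rfl fun a _ => ?_
  rw [Finset.mul_sum]
  refine Finset.sum_congr rfl fun b _ => ?_
  simp [Pi.smul_apply]; ring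

lemma geomForm_sub_right (u v w : B → ℝ) :
    geomForm M u (v - w) = geomForm M u v - geomForm M u w := by
  unfold geomForm
  rw [← Finset.sum_sub_distrib]
  refine Finset.sum_congr rfl fun a _ => ?_
  rw [← Finset.sum_sub_distrib]
  refine Finset.sum_congr rfl fun b _ => ?_
  simp [Pi.sub_apply]; ring

lemma geomForm_symm (u v : B → ℝ) : geomForm M u v = geomForm M v u := by
  unfold geomForm
  rw [Finset.sum_comm]
  refine Finset.sum_congr rfl fun a _ => Finset.sum_congr rfl fun b _ => ?_
  rw [M.symmetric a b]; ring

lemma geomForm_single_self [DecidableEq B] (j : B) :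
    geomForm M (Pi.single j 1) (Pi.single j 1 : B → ℝ) = 1 := by
  unfold geomForm
  simp [Pi.single_apply, ite_mul, M.diagonal]

lemma geomForm_neg_right (u v : B → ℝ) : geomForm M u (-v) = - geomForm M u v := by
  have := geomForm_sub_right (M := M) u 0 v
  simpa [geomForm] using this

lemma geomForm_sub_smul_left (u v w : B → ℝ) (c : ℝ) :
    geomForm M (u - c • v) w = geomForm M u w - c * geomForm M v w := by
  rw [geomForm_symm, geomForm_sub_right, geomForm_smul_right, geomForm_symm w u,
    geomForm_symm w v]

lemma geomForm_invariant {B : Type*} [Fintype B] [DecidableEq B] {W : Type*} [Group W]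
    {M : CoxeterMatrix B} (cs : CoxeterSystem M W)
    (ρ : W →* ((B → ℝ) →ₗ[ℝ] (B → ℝ)))
    (hρ : ∀ (i : B) (v : B → ℝ), ρ (cs.simple i) v =
      v - (2 * geomForm M (Pi.single i 1) v) • (Pi.single i 1 : B → ℝ))
    (w : W) (v u : B → ℝ) : geomForm M (ρ w v) (ρ w u) = geomForm M v u := by
  induction w using cs.simple_induction generalizing v u with
  | simple j =>
      rw [hρ j v, hρ j u, geomForm_sub_smul_left, geomForm_sub_right, geomForm_sub_right,
        geomForm_smul_right, geomForm_smul_right, geomForm_single_self,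
        geomForm_symm v (Pi.single j 1)]
      ring
  | one => simp
  | mul x y hx hy =>
      rw [map_mul]
      simp only [Module.End.mul_apply]
      rw [hx, hy]

end aux

/-- Let `(W, S)` be a Coxeter system, `ρ` its standard geometric representation on
`V = ℝ^S` (characterized by `ρ(sᵢ) v = v - 2⟨αᵢ, v⟩ αᵢ`), and `s = sᵢ ∈ S`.  Then
`C_W(s) = ⟨s⟩ × H`, where `H` is the subgroup of the centralizer consisting of elements
preserving each of the two open half-spaces bounded by the reflection hyperplane `V^s`:
`⟨s⟩ ∩ H = 1` and every element of `C_W(s)` is uniquely a product of an element of `⟨s⟩`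
and one of `H`. -/
theorem centralizer_decomposition
    {B : Type*} [Fintype B] [DecidableEq B] {W : Type*} [Group W]
    {M : CoxeterMatrix B} (cs : CoxeterSystem M W)
    (ρ : W →* ((B → ℝ) →ₗ[ℝ] (B → ℝ)))
    (hρ : ∀ (i : B) (v : B → ℝ), ρ (cs.simple i) v =
      v - (2 * geomForm M (Pi.single i 1) v) • (Pi.single i 1 : B → ℝ))
    (i : B) :
    ∃ H : Subgroup W,
      (H : Set W) = {w | w ∈ Subgroup.centralizer {cs.simple i} ∧
          ∀ v : B → ℝ, 0 < geomForm M (Pi.single i 1) v →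
            0 < geomForm M (Pi.single i 1) (ρ w v)} ∧
      Subgroup.zpowers (cs.simple i) ⊓ H = ⊥ ∧
      ∀ w ∈ Subgroup.centralizer {cs.simple i},
        ∃! p : W × W, p.1 ∈ Subgroup.zpowers (cs.simple i) ∧ p.2 ∈ H ∧ w = p.1 * p.2 := by
  set s := cs.simple i with hs_def
  set α : B → ℝ := Pi.single i 1 with hα_def
  set f : (B → ℝ) → ℝ := geomForm M α with hf_def
  have hfα : f α = 1 := geomForm_single_self i
  have inv : ∀ (w : W) (v u : B → ℝ), geomForm M (ρ w v) (ρ w u) = geomForm M v u :=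
    geomForm_invariant cs ρ hρ
  have hsα : ρ s α = -α := by
    rw [hρ i α, ← hα_def, ← hf_def, hfα, mul_one, two_smul]
    abel
  have hww' : ∀ x y : W, ∀ v : B → ℝ, ρ (x * y) v = ρ x (ρ y v) := by
    intro x y v; rw [map_mul]; rfl
  have hss : s * s = 1 := cs.simple_mul_simple_self i
  have hza : ∀ x ∈ Subgroup.zpowers s, x = 1 ∨ x = s := by
    have hsinv : s⁻¹ = s := inv_eq_of_mul_eq_one_left hss
    have hk : ∀ k : ℤ, s ^ k = 1 ∨ s ^ k = s := by
      intro k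
      induction k using Int.induction_on with
      | zero => left; exact zpow_zero s
      | succ n ih =>
          rw [zpow_add_one]
          rcases ih with h' | h'
          · right; rw [h', one_mul]
          · left; rw [h', hss]
      | pred n ih =>
          rw [zpow_sub_one, hsinv]
          rcases ih with h' | h'
          · right; rw [h', one_mul]
          · left; rw [h', hss]
    intro x hx
    obtain ⟨k, rfl⟩ := Subgroup.mem_zpowers_iff.mp hx
    exact hk k
  -- eigenvector property for centralizer elements
  have heig : ∀ w ∈ Subgroup.centralizer {s}, ρ w α = (f (ρ w α)) • α := by
    intro w hw
    have hcomm : s * w = w * s := (Subgroup.mem_centralizer_iff.mp hw) s rfl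
    have h1 : ρ s (ρ w α) = -(ρ w α) := by
      rw [← hww', hcomm, hww', hsα, map_neg]
    rw [hρ i (ρ w α), ← hα_def, ← hf_def] at h1
    have h2 : ρ w α + ρ w α = (2 * f (ρ w α)) • α := by
      refine eq_of_sub_eq_zero ?_
      rw [add_sub_assoc, h1, add_neg_cancel]
    have h3 : (2 : ℝ) • (ρ w α) = (2 : ℝ) • (f (ρ w α) • α) := by
      rw [two_smul, h2, smul_smul]
    exact smul_right_injective (B → ℝ) two_ne_zero h3
  -- f (ρ w α) squares to 1
  have hsq : ∀ w ∈ Subgroup.centralizer {s}, f (ρ w α) * f (ρ w α) = 1 := by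
    intro w hw
    have h := inv w α α
    rw [heig w hw] at h
    rw [geomForm_smul_right, geomForm_symm, geomForm_smul_right, geomForm_symm,
      ← hf_def, hfα] at h
    rw [← h]; ring
  -- key: f (ρ w v) = f (ρ w α) * f v
  have key : ∀ w ∈ Subgroup.centralizer {s}, ∀ v : B → ℝ,
      f (ρ w v) = f (ρ w α) * f v := by
    intro w hw v
    have h := inv w α v
    rw [heig w hw, geomForm_symm, geomForm_smul_right, geomForm_symm, ← hf_def] at h
    have h2 := hsq w hw
    calc f (ρ w v) = (f (ρ w α) * f (ρ w α)) * f (ρ w v) := by rw [h2]; ring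
      _ = f (ρ w α) * (f (ρ w α) * f (ρ w v)) := by ring
      _ = f (ρ w α) * f v := by rw [h]
  -- characterization of the half-space condition
  have memiff : ∀ w ∈ Subgroup.centralizer {s},
      ((∀ v : B → ℝ, 0 < f v → 0 < f (ρ w v)) ↔ f (ρ w α) = 1) := by
    intro w hw
    constructor
    · intro h
      have h1 : 0 < f (ρ w α) := h α (by rw [hfα]; norm_num)
      rcases mul_self_eq_one_iff.mp (hsq w hw) with h2 | h2
      · exact h2
      · exfalso; rw [h2] at h1; linarith
    · intro h v hv
      rw [key w hw v, h, one_mul]; exact hv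
  -- multiplicativity
  have cmul : ∀ x : W, ∀ y ∈ Subgroup.centralizer {s},
      f (ρ (x * y) α) = f (ρ y α) * f (ρ x α) := by
    intro x y hy
    rw [hww', heig y hy, map_smul]
    simp only [hf_def, hα_def, geomForm_smul_right, geomForm_single_self, mul_one]
  refine ⟨{
    carrier := {w | w ∈ Subgroup.centralizer {s} ∧
      ∀ v : B → ℝ, 0 < f v → 0 < f (ρ w v)}
    one_mem' := ⟨Subgroup.one_mem _, by intro v hv; rw [map_one]; exact hv⟩
    mul_mem' := by
      rintro a b ⟨ha1, ha2⟩ ⟨hb1, hb2⟩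
      refine ⟨Subgroup.mul_mem _ ha1 hb1, fun v hv => ?_⟩
      rw [hww']
      exact ha2 _ (hb2 v hv)
    inv_mem' := by
      rintro w ⟨hw1, hw2⟩
      refine ⟨Subgroup.inv_mem _ hw1, fun v hv => ?_⟩
      have h1 : f (ρ w α) = 1 := (memiff w hw1).mp hw2
      have h2 : f (ρ w (ρ w⁻¹ v)) = f (ρ w⁻¹ v) := by
        rw [key w hw1, h1, one_mul]
      rw [← hww', mul_inv_cancel, map_one] at h2
      rw [← h2]; exact hv }, rfl, ?_, ?_⟩
  · -- intersection is trivial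
    rw [eq_bot_iff]
    rintro x ⟨hx1, hx2⟩
    obtain ⟨hxc, hxpos⟩ := hx2
    rcases hza x hx1 with rfl | rfl
    · exact Subgroup.mem_bot.mpr rfl
    · exfalso
      have h1 : f (ρ s α) = 1 := (memiff s hxc).mp hxpos
      rw [hsα] at h1
      rw [hf_def, geomForm_neg_right, ← hf_def, hfα] at h1
      linarith
  · -- existence and uniqueness of the decomposition
    intro w hw
    have hsc : s ∈ Subgroup.centralizer {s} := Subgroup.mem_centralizer_iff.mpr
      (by rintro y rfl; rfl)
    have hfsα : f (ρ s α) = -1 := by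
      rw [hsα, hf_def, geomForm_neg_right, ← hf_def, hfα]
    have hone : f (ρ (1 : W) α) = 1 := by rw [map_one]; exact hfα
    rcases mul_self_eq_one_iff.mp (hsq w hw) with hc | hc
    · -- c = 1 : w itself is in H
      refine ⟨(1, w), ⟨Subgroup.one_mem _, ⟨hw, (memiff w hw).mpr hc⟩, (one_mul w).symm⟩, ?_⟩
      rintro ⟨a, h⟩ ⟨ha, ⟨hh1, hh2⟩, rfl⟩
      have hch : f (ρ h α) = 1 := (memiff h hh1).mp hh2
      have hca : f (ρ (a * h) α) = f (ρ a α) := by rw [cmul a h hh1, hch, one_mul]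
      rw [hca] at hc
      rcases hza a ha with rfl | rfl
      · simp
      · exfalso; rw [hfsα] at hc; linarith
    · -- c = -1 : w = s * (s * w)
      have hsw : s * w ∈ Subgroup.centralizer {s} := Subgroup.mul_mem _ hsc hw
      have hcsw : f (ρ (s * w) α) = 1 := by
        rw [cmul s w hw, hc, hfsα]; norm_num
      refine ⟨(s, s * w), ⟨Subgroup.mem_zpowers s, ⟨hsw, (memiff _ hsw).mpr hcsw⟩,
        by rw [← mul_assoc, hss, one_mul]⟩, ?_⟩
      rintro ⟨a, h⟩ ⟨ha, ⟨hh1, hh2⟩, rfl⟩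
      have hch : f (ρ h α) = 1 := (memiff h hh1).mp hh2
      have hca : f (ρ (a * h) α) = f (ρ a α) := by rw [cmul a h hh1, hch, one_mul]
      rw [hca] at hc
      rcases hza a ha with rfl | rfl
      · exfalso; rw [hone] at hc; linarith
      · have : s * (s * h) = h := by rw [← mul_assoc, hss, one_mul]
        simp [← mul_assoc, hss]
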